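/- For any positive integer n, log I(n) satisfies ω(φ(n))·log 2 ≤ log I(n) ≤ Ω(φ(n))·log 2, where I(n) is the number of isomorphism classes of subgroups of (ℤ/nℤ)ˣ. -/

import Mathlib

open Finset


def partsOf (s : Finset ℕ) : Multiset ℕ :=
  s.val.map (fun x => x - (s.filter (· < x)).card)

lemma partsOf_insert (s : Finset ℕ) (x : ℕ) (hx : ∀ y ∈ s, y < x) :
    partsOf (insert x s) = (x - s.card) ::ₘ partsOf s := by
  have hxs : x ∉ s := fun h => lt_irrefl x (hx x h)
  unfold partsOf
  rw [Finset.insert_val, Multiset.ndinsert_of_notMem hxs, Multiset.map_cons]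
  congr 1
  · congr 1
    rw [Finset.filter_insert, if_neg (lt_irrefl x), Finset.filter_true_of_mem hx]
  · apply Multiset.map_congr rfl
    intro y hy
    have : Finset.filter (· < y) (insert x s) = Finset.filter (· < y) s := by
      rw [Finset.filter_insert, if_neg]
      exact fun h => absurd (hx y hy) (by omega)
    rw [this]

lemma exists_finset_partsOf_aux :
    ∀ (E : Multiset ℕ) (B : ℕ), (∀ x ∈ E, 1 ≤ x ∧ x ≤ B) →
      ∃ s : Finset ℕ, s.card = Multiset.card E ∧ (∀ x ∈ s, 1 ≤ x ∧ x + 1 ≤ B + s.card)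
        ∧ partsOf s = E := by
  intro E
  induction E using Multiset.strongInductionOn with
  | ih E ih =>
    intro B hE
    rcases eq_or_ne E 0 with rfl | hne
    · exact ⟨∅, by simp [partsOf]⟩
    · have htne : E.toFinset.Nonempty := by
        rw [Multiset.toFinset_nonempty]; exact hne
      set M := E.toFinset.max' htne with hMdef
      have hM : M ∈ E := Multiset.mem_toFinset.1 (E.toFinset.max'_mem htne)
      have hMmax : ∀ x ∈ E, x ≤ M := fun x hx =>
        E.toFinset.le_max' x (Multiset.mem_toFinset.2 hx)
      set E' := E.erase M with hE'def
      have hEeq : M ::ₘ E' = E := Multiset.cons_erase hM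
      obtain ⟨s', hcard, hbound, hparts⟩ :=
        ih E' (Multiset.erase_lt.2 hM) M
          (fun x hx => ⟨(hE x (Multiset.mem_of_mem_erase hx)).1,
            hMmax x (Multiset.mem_of_mem_erase hx)⟩)
      have hgt : ∀ y ∈ s', y < M + s'.card := fun y hy => by
        have := (hbound y hy).2; omega
      have hnotmem : M + s'.card ∉ s' := fun h => lt_irrefl _ (hgt _ h)
      refine ⟨insert (M + s'.card) s', ?_, ?_, ?_⟩
      · rw [Finset.card_insert_of_notMem hnotmem, hcard, ← hEeq, Multiset.card_cons]
      · intro x hx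
        have hM1 : 1 ≤ M := (hE M hM).1
        have hMB : M ≤ B := (hE M hM).2
        rw [Finset.card_insert_of_notMem hnotmem]
        rcases Finset.mem_insert.1 hx with rfl | hx
        · omega
        · have := hbound x hx; omega
      · rw [partsOf_insert s' _ hgt, hparts, Nat.add_sub_cancel, hEeq]

def mulPiCongrLeft' {α β : Type*} (P : α → Type*) [∀ a, Mul (P a)] (e : α ≃ β) :
    (∀ a, P a) ≃* ∀ b, P (e.symm b) :=
  { Equiv.piCongrLeft' P e with map_mul' := fun _ _ => rfl }

def mulPiCurry {α : Type*} {β : α → Type*} (γ : ∀ a, β a → Type*) [∀ a b, Mul (γ a b)] :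
    ((x : Σ a, β a) → γ x.1 x.2) ≃* ∀ a, ∀ b, γ a b :=
  { Equiv.piCurry γ with map_mul' := fun _ _ => rfl }

def mulPiSplit {ι : Type*} (p : ι → Prop) [DecidablePred p] (A : ι → Type*) [∀ i, Mul (A i)] :
    (∀ i, A i) ≃* (∀ i : {x // p x}, A i) × (∀ i : {x // ¬ p x}, A i) :=
  { Equiv.piEquivPiSubtypeProd p A with map_mul' := fun _ _ => rfl }

def zmodMulCast {k l : ℕ} (h : k = l) : Multiplicative (ZMod k) ≃* Multiplicative (ZMod l) :=
  h ▸ MulEquiv.refl _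

lemma eq_of_monotone_of_multiset_eq {n : ℕ} {f g : Fin n → ℕ} (hf : Monotone f)
    (hg : Monotone g)
    (h : Multiset.map f Finset.univ.val = Multiset.map g Finset.univ.val) : f = g := by
  apply List.ofFn_injective
  refine List.Perm.eq_of_sortedLE hf.sortedLE_ofFn hg.sortedLE_ofFn ?_
  rw [← Multiset.coe_eq_coe, ← Fin.univ_val_map, ← Fin.univ_val_map]
  exact h

lemma map_univ_comp_equiv {α β γ : Type*} [Fintype α] [Fintype β] (f : α → γ) (e : β ≃ α) :
    Multiset.map (f ∘ e) Finset.univ.val = Multiset.map f Finset.univ.val := by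
  rw [← Multiset.map_map]
  congr 1
  have := congrArg Finset.val (Finset.map_univ_equiv e)
  rwa [Finset.map_val, Equiv.coe_toEmbedding] at this

lemma exists_equiv_comp {α β : Type*} [Fintype α] [Fintype β] (f : α → ℕ) (g : β → ℕ)
    (h : Multiset.map f Finset.univ.val = Multiset.map g Finset.univ.val) :
    ∃ σ : α ≃ β, ∀ a, f a = g (σ a) := by
  have hcard : Fintype.card β = Fintype.card α := by
    have := congrArg Multiset.card h
    simpa using this.symm
  set n := Fintype.card α
  set eα : α ≃ Fin n := Fintype.equivFin α with heα
  set eβ : β ≃ Fin n := (Fintype.equivFin β).trans (finCongr hcard) with heβ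
  set f' : Fin n → ℕ := f ∘ eα.symm with hf'
  set g' : Fin n → ℕ := g ∘ eβ.symm with hg'
  have hmf : Multiset.map f' Finset.univ.val = Multiset.map f Finset.univ.val :=
    map_univ_comp_equiv f eα.symm
  have hmg : Multiset.map g' Finset.univ.val = Multiset.map g Finset.univ.val :=
    map_univ_comp_equiv g eβ.symm
  set τ := Tuple.sort f'
  set τ' := Tuple.sort g'
  have key : f' ∘ τ = g' ∘ τ' := by
    apply eq_of_monotone_of_multiset_eq (Tuple.monotone_sort f') (Tuple.monotone_sort g')
    rw [show (f' ∘ τ : Fin n → ℕ) = f' ∘ (τ : Fin n ≃ Fin n) from rfl]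
    rw [show (g' ∘ τ' : Fin n → ℕ) = g' ∘ (τ' : Fin n ≃ Fin n) from rfl]
    rw [map_univ_comp_equiv f' τ, map_univ_comp_equiv g' τ', hmf, hmg, h]
  refine ⟨eα.trans ((τ.symm : Fin n ≃ Fin n).trans ((τ' : Fin n ≃ Fin n).trans eβ.symm)), ?_⟩
  intro a
  have hfa : f a = f' (eα a) := by simp [hf']
  have := congrFun key (τ.symm (eα a))
  simp only [Function.comp_apply, Equiv.apply_symm_apply] at this
  simp only [Equiv.trans_apply, hfa]
  exact this

lemma nonempty_piMulEquiv {α β : Type*} [Fintype α] [Fintype β] (f : α → ℕ) (g : β → ℕ)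
    (h : Multiset.map f Finset.univ.val = Multiset.map g Finset.univ.val) :
    Nonempty ((∀ a, Multiplicative (ZMod (f a))) ≃* (∀ b, Multiplicative (ZMod (g b)))) := by
  obtain ⟨σ, hσ⟩ := exists_equiv_comp f g h
  exact ⟨(MulEquiv.piCongrRight fun a => zmodMulCast (hσ a)).trans
    (mulPiCongrLeft' (fun b => Multiplicative (ZMod (g b))) σ.symm).symm⟩

theorem classify (G : Type*) [CommGroup G] [Finite G] :
    ∃ (ι : Type) (_ : Fintype ι) (p e : ι → ℕ),
      (∀ i, (p i).Prime) ∧ (∀ i, e i ≠ 0) ∧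
      Nonempty (G ≃* ∀ i, Multiplicative (ZMod (p i ^ e i))) := by
  obtain ⟨ι, inst, p, hp, e, ⟨ad⟩⟩ := AddCommGroup.equiv_directSum_zmod_of_finite (Additive G)
  classical
  have base : G ≃* ∀ i, Multiplicative (ZMod (p i ^ e i)) :=
    MulEquiv.toAdditive.symm <| ad.trans <| (DirectSum.addEquivProd _).trans <|
      MulEquiv.toAdditiveRight <| MulEquiv.piMultiplicative _
  haveI : ∀ i : {x : ι // ¬ e x ≠ 0}, Unique (Multiplicative (ZMod (p i.1 ^ e i.1))) := by
    intro i
    have h1 : p i.1 ^ e i.1 = 1 := by rw [not_not.1 i.2, pow_zero]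
    rw [h1]
    infer_instance
  exact ⟨{i // e i ≠ 0}, inferInstance, fun i => p i.1, fun i => e i.1, fun i => hp i.1,
    fun i => i.2,
    ⟨base.trans <| (mulPiSplit (fun i => e i ≠ 0) _).trans <| MulEquiv.prodUnique⟩⟩
section Decode
open Finset

lemma sum_factorization_eq (m : ℕ) :
    ∑ p ∈ m.primeFactors, m.factorization p = m.primeFactorsList.length := by
  have h1 : m.primeFactors = Multiset.toFinset (m.primeFactorsList : Multiset ℕ) := rfl
  rw [h1, ← Multiset.coe_card, ← Multiset.toFinset_sum_count_eq]
  apply Finset.sum_congr rfl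
  intro p _
  rw [← Nat.primeFactorsList_count_eq]
  simp

/-- The wrapper existence lemma: every multiset of positive integers is `partsOf` of a
finite set whose elements lie in `[1, E.sum]`. -/
lemma exists_finset_partsOf (E : Multiset ℕ) (hE : ∀ x ∈ E, 1 ≤ x) :
    ∃ s : Finset ℕ, (∀ x ∈ s, 1 ≤ x ∧ x ≤ E.sum) ∧ partsOf s = E := by
  rcases eq_or_ne E 0 with rfl | hne
  · exact ⟨∅, by simp, by simp [partsOf]⟩
  · have htne : E.toFinset.Nonempty := by rw [Multiset.toFinset_nonempty]; exact hne
    set M := E.toFinset.max' htne with hMdef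
    have hM : M ∈ E := Multiset.mem_toFinset.1 (E.toFinset.max'_mem htne)
    have hMmax : ∀ x ∈ E, x ≤ M := fun x hx => E.toFinset.le_max' x (Multiset.mem_toFinset.2 hx)
    obtain ⟨s, hcard, hbound, hparts⟩ :=
      exists_finset_partsOf_aux E M (fun x hx => ⟨hE x hx, hMmax x hx⟩)
    have hsum : M + (Multiset.card E - 1) ≤ E.sum := by
      have hE' := Multiset.cons_erase hM
      have h1 : Multiset.card (E.erase M) ≤ (E.erase M).sum := by
        simpa using Multiset.card_nsmul_le_sum
          (fun x hx => hE x (Multiset.mem_of_mem_erase hx))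
      have h2 : E.sum = M + (E.erase M).sum := by rw [← hE']; simp
      have h3 : Multiset.card E = Multiset.card (E.erase M) + 1 := by
        rw [← hE']; simp
      omega
    have hcE : 0 < Multiset.card E := Multiset.card_pos.2 hne
    refine ⟨s, fun x hx => ⟨(hbound x hx).1, ?_⟩, hparts⟩
    have h4 := (hbound x hx).2
    omega

/-- decode: Pi-group of cyclic `p`-groups determined by a finite set encoding partitions. -/
abbrev pgrp (p : ℕ) (s : Finset ℕ) : Type :=
  ∀ x : s, Multiplicative (ZMod (p ^ (x.1 - (s.filter (· < x.1)).card)))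

abbrev Dom (m : ℕ) : Type :=
  ∀ pp : m.primeFactors, Finset (Finset.Icc 1 (m.factorization pp.1))

abbrev decodeG (m : ℕ) (d : Dom m) : Type :=
  ∀ pp : m.primeFactors, pgrp pp.1 ((d pp).map (Function.Embedding.subtype _))

end Decode
section Realize
open Finset

def pgrpCast {p : ℕ} {s t : Finset ℕ} (h : s = t) : pgrp p s ≃* pgrp p t :=
  h ▸ MulEquiv.refl _

lemma exists_decode (m : ℕ) (hm : m ≠ 0) (K : Type*) [CommGroup K] [Finite K]
    (hdvd : Nat.card K ∣ m) : ∃ d : Dom m, Nonempty (K ≃* decodeG m d) := by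
  classical
  obtain ⟨ι, fι, p, e, hp, he, ⟨φK⟩⟩ := classify K
  have hcardK : Nat.card K = ∏ i, p i ^ e i := by
    rw [Nat.card_congr φK.toEquiv, Nat.card_pi]
    exact Finset.prod_congr rfl fun i _ => by
      rw [Nat.card_congr Multiplicative.toAdd, Nat.card_zmod]
  have hqdvd : ∀ i, p i ^ e i ∣ m := fun i =>
    dvd_trans (hcardK ▸ Finset.dvd_prod_of_mem _ (mem_univ i)) hdvd
  have hpm : ∀ i, p i ∈ m.primeFactors := fun i =>
    Nat.mem_primeFactors.2 ⟨hp i, dvd_trans (dvd_pow_self (p i) (he i)) (hqdvd i), hm⟩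
  set F : ι → m.primeFactors := fun i => ⟨p i, hpm i⟩ with hF
  haveI : ∀ pp : m.primeFactors, Fintype {i // F i = pp} := fun pp => Subtype.fintype _
  have main : ∀ pp : m.primeFactors, ∃ s : Finset ℕ,
      (∀ x ∈ s, 1 ≤ x ∧ x ≤ m.factorization pp.1) ∧
      partsOf s = Multiset.map (fun j : {i // F i = pp} => e j.1) Finset.univ.val := by
    intro pp
    have hppprime : pp.1.Prime := Nat.prime_of_mem_primeFactors pp.2
    set E : Multiset ℕ := Multiset.map (fun j : {i // F i = pp} => e j.1) Finset.univ.val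
      with hEdef
    have hE1 : ∀ x ∈ E, 1 ≤ x := by
      intro x hx
      obtain ⟨j, _, rfl⟩ := Multiset.mem_map.1 hx
      exact Nat.one_le_iff_ne_zero.2 (he j.1)
    have hEsum : E.sum = ∑ j : {i // F i = pp}, e j.1 := rfl
    have hSdvd : pp.1 ^ (∑ j : {i // F i = pp}, e j.1) ∣ m := by
      have h1 : pp.1 ^ (∑ j : {i // F i = pp}, e j.1)
          = ∏ j : {i // F i = pp}, p j.1 ^ e j.1 := by
        rw [← Finset.prod_pow_eq_pow_sum]
        exact Finset.prod_congr rfl fun j _ => by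
          rw [show p j.1 = pp.1 from congrArg Subtype.val j.2]
      have h2 := Finset.prod_subtype (p := fun i => F i = pp) (F := this pp)
          (Finset.univ.filter fun i => F i = pp) (fun x => by simp)
          (fun i => p i ^ e i)
      rw [h1, ← h2]
      exact dvd_trans (Finset.prod_dvd_prod_of_subset _ _ _ (Finset.filter_subset _ _))
        (hcardK ▸ hdvd)
    have hsle : E.sum ≤ m.factorization pp.1 := by
      rw [hEsum]
      exact (Nat.Prime.pow_dvd_iff_le_factorization hppprime hm).1 hSdvd
    obtain ⟨s, hs1, hs2⟩ := exists_finset_partsOf E hE1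
    exact ⟨s, fun x hx => ⟨(hs1 x hx).1, le_trans (hs1 x hx).2 hsle⟩, hs2⟩
  choose s hsmem hsparts using main
  set d : Dom m := fun pp => (s pp).subtype (fun x => x ∈ Finset.Icc 1 (m.factorization pp.1))
    with hd
  have hback : ∀ pp, ((d pp).map (Function.Embedding.subtype _)) = s pp := by
    intro pp
    rw [hd]
    rw [Finset.subtype_map]
    exact Finset.filter_true_of_mem fun x hx =>
      Finset.mem_Icc.2 ⟨(hsmem pp x hx).1, (hsmem pp x hx).2⟩
  have hunivE : ∀ pp : m.primeFactors,
      Multiset.map (fun j : {i // F i = pp} => p j.1 ^ e j.1) Finset.univ.val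
      = Multiset.map (fun x : (s pp : Finset ℕ) =>
          pp.1 ^ (x.1 - ((s pp).filter (· < x.1)).card)) Finset.univ.val := by
    intro pp
    have l1 : Multiset.map (fun j : {i // F i = pp} => p j.1 ^ e j.1) Finset.univ.val
        = Multiset.map (fun t => pp.1 ^ t)
            (Multiset.map (fun j : {i // F i = pp} => e j.1) Finset.univ.val) := by
      rw [Multiset.map_map]
      exact Multiset.map_congr rfl fun j _ => by
        rw [show p j.1 = pp.1 from congrArg Subtype.val j.2]; rfl
    have r1 : Multiset.map (fun x : (s pp : Finset ℕ) =>
          pp.1 ^ (x.1 - ((s pp).filter (· < x.1)).card)) Finset.univ.val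
        = Multiset.map (fun t => pp.1 ^ t) (partsOf (s pp)) := by
      rw [Finset.univ_eq_attach, Finset.attach_val]
      unfold partsOf
      rw [Multiset.map_map]
      conv_rhs => rw [← Multiset.attach_map_val (s pp).val, Multiset.map_map]
      rfl
    rw [l1, r1, hsparts pp]
  have isoP : ∀ pp : m.primeFactors,
      (∀ j : {i // F i = pp}, Multiplicative (ZMod (p j.1 ^ e j.1))) ≃* pgrp pp.1 (s pp) :=
    fun pp => (nonempty_piMulEquiv _ _ (hunivE pp)).some
  refine ⟨d, ⟨?_⟩⟩
  have step1 : K ≃* ∀ x : Σ pp : m.primeFactors, {i // F i = pp},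
      Multiplicative (ZMod (p x.2.1 ^ e x.2.1)) :=
    φK.trans (mulPiCongrLeft' (fun i => Multiplicative (ZMod (p i ^ e i)))
      (Equiv.sigmaFiberEquiv F).symm)
  have step2 : (∀ x : Σ pp : m.primeFactors, {i // F i = pp},
      Multiplicative (ZMod (p x.2.1 ^ e x.2.1)))
      ≃* ∀ pp : m.primeFactors, ∀ j : {i // F i = pp}, Multiplicative (ZMod (p j.1 ^ e j.1)) :=
    mulPiCurry (fun pp (j : {i // F i = pp}) => Multiplicative (ZMod (p j.1 ^ e j.1)))
  exact step1.trans (step2.trans ((MulEquiv.piCongrRight isoP).trans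
    (MulEquiv.piCongrRight fun pp => (pgrpCast (hback pp)).symm)))

end Realize
section Counting
open Finset

lemma card_Dom (m : ℕ) : Fintype.card (Dom m) = 2 ^ m.primeFactorsList.length := by
  classical
  rw [Fintype.card_pi]
  have h1 : ∀ pp : m.primeFactors,
      Fintype.card (Finset ((Finset.Icc 1 (m.factorization pp.1)) : Finset ℕ))
        = 2 ^ m.factorization pp.1 := by
    intro pp
    rw [Fintype.card_finset, Fintype.card_coe, Nat.card_Icc, Nat.add_sub_cancel]
  rw [Finset.prod_congr rfl (fun pp _ => h1 pp), Finset.univ_eq_attach,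
    Finset.prod_attach m.primeFactors (fun p => 2 ^ m.factorization p),
    Finset.prod_pow_eq_pow_sum, sum_factorization_eq]

theorem card_quot_le (G : Type*) [CommGroup G] [Fintype G] :
    Nat.card (Quot fun H K : Subgroup G => Nonempty (H ≃* K))
      ≤ 2 ^ (Fintype.card G).primeFactorsList.length := by
  classical
  set m := Fintype.card G with hmdef
  have hm : m ≠ 0 := Fintype.card_ne_zero
  set r : Subgroup G → Subgroup G → Prop := fun H K => Nonempty (H ≃* K) with hr
  set Ψ : Dom m → Quot r := fun d =>
    if h : ∃ H : Subgroup G, Nonempty (H ≃* decodeG m d) then Quot.mk r h.choose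
    else Quot.mk r ⊥ with hΨ
  have hsurj : Function.Surjective Ψ := by
    intro q
    induction q using Quot.ind with
    | _ H =>
      have hdvd : Nat.card H ∣ m := by
        rw [hmdef, ← Nat.card_eq_fintype_card]
        exact Subgroup.card_subgroup_dvd_card H
      obtain ⟨d, ⟨φ⟩⟩ := exists_decode m hm H hdvd
      refine ⟨d, ?_⟩
      have hex : ∃ H' : Subgroup G, Nonempty (H' ≃* decodeG m d) := ⟨H, ⟨φ⟩⟩
      rw [hΨ]
      simp only [dif_pos hex]
      exact Quot.sound ⟨hex.choose_spec.some.trans φ.symm⟩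
  calc Nat.card (Quot r) ≤ Nat.card (Dom m) := Nat.card_le_card_of_surjective Ψ hsurj
    _ = 2 ^ m.primeFactorsList.length := by rw [Nat.card_eq_fintype_card, card_Dom]

theorem card_quot_ge (G : Type*) [CommGroup G] [Fintype G] :
    2 ^ (Fintype.card G).primeFactors.card
      ≤ Nat.card (Quot fun H K : Subgroup G => Nonempty (H ≃* K)) := by
  classical
  set m := Fintype.card G with hmdef
  set r : Subgroup G → Subgroup G → Prop := fun H K => Nonempty (H ≃* K) with hr
  set tor : Finset ℕ → Subgroup G := fun S =>
    { carrier := {x | x ^ (∏ p ∈ S, p) = 1}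
      one_mem' := one_pow _
      mul_mem' := fun {a b} ha hb => by
        simp only [Set.mem_setOf_eq] at *
        rw [mul_pow, ha, hb, one_mul]
      inv_mem' := fun {a} ha => by
        simp only [Set.mem_setOf_eq] at *
        rw [inv_pow, ha, inv_one] } with htor
  have hmem : ∀ (S) (x : G), x ∈ tor S ↔ x ^ (∏ p ∈ S, p) = 1 := fun S x => Iff.rfl
  have key : ∀ S ∈ m.primeFactors.powerset, ∀ q : ℕ, q.Prime →
      (q ∈ S ↔ q ∣ Nat.card (tor S)) := by
    intro S hS q hq
    rw [Finset.mem_powerset] at hS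
    haveI : Fact q.Prime := ⟨hq⟩
    constructor
    · intro hqS
      have hqm : q ∣ Fintype.card G := Nat.dvd_of_mem_primeFactors (hS hqS)
      obtain ⟨x, hx⟩ := exists_prime_orderOf_dvd_card q hqm
      have hxmem : x ∈ tor S := by
        rw [hmem]
        exact orderOf_dvd_iff_pow_eq_one.1 (hx ▸ Finset.dvd_prod_of_mem _ hqS)
      have hord : orderOf (⟨x, hxmem⟩ : tor S) = q := by
        rw [Subgroup.orderOf_mk, hx]
      rw [← hord]
      exact orderOf_dvd_natCard _
    · intro hdvd
      have hdvd' : q ∣ Fintype.card (tor S) := by rwa [← Nat.card_eq_fintype_card]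
      obtain ⟨y, hy⟩ := exists_prime_orderOf_dvd_card (G := tor S) q hdvd'
      have hyG : orderOf (y : G) = q := by rw [Subgroup.orderOf_coe, hy]
      have h1 : (y : G) ^ (∏ p ∈ S, p) = 1 := (hmem S y.1).1 y.2
      have h2 : q ∣ ∏ p ∈ S, p := hyG ▸ orderOf_dvd_iff_pow_eq_one.2 h1
      obtain ⟨t, htS, hqt⟩ := (Nat.Prime.prime hq).exists_mem_finset_dvd h2
      rwa [(Nat.prime_dvd_prime_iff_eq hq (Nat.prime_of_mem_primeFactors (hS htS))).1 hqt]
  have hequiv : Equivalence r :=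
    ⟨fun H => ⟨MulEquiv.refl H⟩, fun ⟨f⟩ => ⟨f.symm⟩, fun ⟨f⟩ ⟨g⟩ => ⟨f.trans g⟩⟩
  have hinj : Function.Injective
      (fun S : m.primeFactors.powerset => Quot.mk r (tor S.1)) := by
    intro S T hST
    have hiso : Nonempty ((tor S.1) ≃* (tor T.1)) :=
      (hequiv.eqvGen_iff).1 (Quot.eq.1 hST)
    have hcard : Nat.card (tor S.1) = Nat.card (tor T.1) :=
      Nat.card_congr hiso.some.toEquiv
    apply Subtype.ext
    apply Finset.ext
    intro q
    constructor
    · intro hqS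
      have hq : q.Prime := Nat.prime_of_mem_primeFactors (Finset.mem_powerset.1 S.2 hqS)
      exact (key T.1 T.2 q hq).2 (hcard ▸ (key S.1 S.2 q hq).1 hqS)
    · intro hqT
      have hq : q.Prime := Nat.prime_of_mem_primeFactors (Finset.mem_powerset.1 T.2 hqT)
      exact (key S.1 S.2 q hq).2 (hcard ▸ (key T.1 T.2 q hq).1 hqT)
  have hle := Nat.card_le_card_of_injective _ hinj
  rwa [Nat.card_eq_fintype_card, Fintype.card_coe, Finset.card_powerset] at hle

end Counting

/-- `ω(φ(n))·log 2 ≤ log I(n) ≤ Ω(φ(n))·log 2`, where `I(n)` is the number of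
isomorphism classes of subgroups of `(ℤ/nℤ)ˣ`, `ω` counts distinct prime factors
and `Ω` counts prime factors with multiplicity. -/
theorem log_I_bounds (n : ℕ) [NeZero n] :
    ((Nat.totient n).primeFactors.card : ℝ) * Real.log 2
        ≤ Real.log
            (Nat.card (Quot fun H K : Subgroup (ZMod n)ˣ => Nonempty (H ≃* K))) ∧
      Real.log
          (Nat.card (Quot fun H K : Subgroup (ZMod n)ˣ => Nonempty (H ≃* K)))
        ≤ ((Nat.totient n).primeFactorsList.length : ℝ) * Real.log 2 := by
  have hcard : Fintype.card (ZMod n)ˣ = Nat.totient n := ZMod.card_units_eq_totient n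
  have hub := card_quot_le (ZMod n)ˣ
  have hlb := card_quot_ge (ZMod n)ˣ
  rw [hcard] at hub hlb
  set I := Nat.card (Quot fun H K : Subgroup (ZMod n)ˣ => Nonempty (H ≃* K)) with hI
  haveI : Nonempty (Quot fun H K : Subgroup (ZMod n)ˣ => Nonempty (H ≃* K)) :=
    ⟨Quot.mk _ ⊥⟩
  have hIpos : 0 < I := Nat.card_pos
  constructor
  · have h1 : ((Nat.totient n).primeFactors.card : ℝ) * Real.log 2
        = Real.log ((2 ^ (Nat.totient n).primeFactors.card : ℕ) : ℝ) := by
      push_cast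
      rw [Real.log_pow]
    rw [h1]
    exact Real.log_le_log (by positivity) (by exact_mod_cast hlb)
  · have h2 : ((Nat.totient n).primeFactorsList.length : ℝ) * Real.log 2
        = Real.log ((2 ^ (Nat.totient n).primeFactorsList.length : ℕ) : ℝ) := by
      push_cast
      rw [Real.log_pow]
    rw [h2]
    exact Real.log_le_log (by exact_mod_cast hIpos) (by exact_mod_cast hub)
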